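/- The monoid of 2×2 matrices with non-negative integer entries and determinant 1 is freely generated by the matrices L = [[1,0],[1,1]] and U = [[1,1],[0,1]]; that is, every such matrix admits a unique factorization as a product of L's and U's. -/

import Mathlib

def L : Matrix (Fin 2) (Fin 2) ℕ := !![1,0;1,1]
def U : Matrix (Fin 2) (Fin 2) ℕ := !![1,1;0,1]

lemma Lmul (P : Matrix (Fin 2) (Fin 2) ℕ) :
    L * P = !![P 0 0, P 0 1; P 0 0 + P 1 0, P 0 1 + P 1 1] := by
  ext i j
  fin_cases i <;> fin_cases j <;>
    simp [L, Matrix.mul_apply, Fin.sum_univ_two]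

lemma Umul (P : Matrix (Fin 2) (Fin 2) ℕ) :
    U * P = !![P 0 0 + P 1 0, P 0 1 + P 1 1; P 1 0, P 1 1] := by
  ext i j
  fin_cases i <;> fin_cases j <;>
    simp [U, Matrix.mul_apply, Fin.sum_univ_two]

lemma word_pos (w : List (Matrix (Fin 2) (Fin 2) ℕ))
    (h : ∀ A ∈ w, A = L ∨ A = U) : 1 ≤ w.prod 0 0 ∧ 1 ≤ w.prod 1 1 := by
  induction w with
  | nil => simp [Matrix.one_apply]
  | cons A t ih =>
    have ht := ih (fun B hB => h B (List.mem_cons_of_mem _ hB))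
    rcases h A (List.mem_cons_self) with rfl | rfl <;> rw [List.prod_cons]
    · rw [Lmul]; constructor <;> simp <;> omega
    · rw [Umul]; constructor <;> simp <;> omega

lemma Lcancel {P Q : Matrix (Fin 2) (Fin 2) ℕ} (h : L * P = L * Q) : P = Q := by
  rw [Lmul, Lmul] at h
  have e := fun i j => congrFun (congrFun h i) j
  have e00 := e 0 0; have e01 := e 0 1; have e10 := e 1 0; have e11 := e 1 1
  simp at e00 e01 e10 e11
  ext i j; fin_cases i <;> fin_cases j <;> simp <;> omega

lemma Ucancel {P Q : Matrix (Fin 2) (Fin 2) ℕ} (h : U * P = U * Q) : P = Q := by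
  rw [Umul, Umul] at h
  have e := fun i j => congrFun (congrFun h i) j
  have e00 := e 0 0; have e01 := e 0 1; have e10 := e 1 0; have e11 := e 1 1
  simp at e00 e01 e10 e11
  ext i j; fin_cases i <;> fin_cases j <;> simp <;> omega

lemma word_eq : ∀ w1 w2 : List (Matrix (Fin 2) (Fin 2) ℕ),
    (∀ A ∈ w1, A = L ∨ A = U) → (∀ A ∈ w2, A = L ∨ A = U) →
    w1.prod = w2.prod → w1 = w2 := by
  intro w1
  induction w1 with
  | nil =>
    intro w2 _ h2 hp
    cases w2 with
    | nil => rfl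
    | cons B t =>
      exfalso
      have ht := word_pos t (fun A hA => h2 A (List.mem_cons_of_mem _ hA))
      rcases h2 B (List.mem_cons_self) with rfl | rfl <;>
        rw [List.prod_cons] at hp
      · rw [Lmul] at hp
        have := congrFun (congrFun hp 1) 0
        simp [Matrix.one_apply] at this
        omega
      · rw [Umul] at hp
        have := congrFun (congrFun hp 0) 1
        simp [Matrix.one_apply] at this
        omega
  | cons A t1 ih =>
    intro w2 h1 h2 hp
    have ht1 := word_pos t1 (fun B hB => h1 B (List.mem_cons_of_mem _ hB))
    cases w2 with
    | nil =>
      exfalso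
      rcases h1 A (List.mem_cons_self) with rfl | rfl <;>
        rw [List.prod_cons] at hp
      · rw [Lmul] at hp
        have := congrFun (congrFun hp 1) 0
        simp [Matrix.one_apply] at this
        omega
      · rw [Umul] at hp
        have := congrFun (congrFun hp 0) 1
        simp [Matrix.one_apply] at this
        omega
    | cons B t2 =>
      have ht2 := word_pos t2 (fun C hC => h2 C (List.mem_cons_of_mem _ hC))
      rw [List.prod_cons, List.prod_cons] at hp
      rcases h1 A (List.mem_cons_self) with rfl | rfl <;>
        rcases h2 B (List.mem_cons_self) with rfl | rfl
      · rw [ih t2 (fun C hC => h1 C (List.mem_cons_of_mem _ hC))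
            (fun C hC => h2 C (List.mem_cons_of_mem _ hC)) (Lcancel hp)]
      · exfalso
        rw [Lmul, Umul] at hp
        have e00 := congrFun (congrFun hp 0) 0
        have e10 := congrFun (congrFun hp 1) 0
        simp at e00 e10
        omega
      · exfalso
        rw [Lmul, Umul] at hp
        have e00 := congrFun (congrFun hp 0) 0
        have e10 := congrFun (congrFun hp 1) 0
        simp at e00 e10
        omega
      · rw [ih t2 (fun C hC => h1 C (List.mem_cons_of_mem _ hC))
            (fun C hC => h2 C (List.mem_cons_of_mem _ hC)) (Ucancel hp)]

lemma exists_word : ∀ n (M : Matrix (Fin 2) (Fin 2) ℕ),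
    M 0 0 * M 1 1 = M 0 1 * M 1 0 + 1 → M 0 1 + M 1 0 ≤ n →
    ∃ w : List (Matrix (Fin 2) (Fin 2) ℕ),
      (∀ A ∈ w, A = L ∨ A = U) ∧ w.prod = M := by
  intro n
  induction n with
  | zero =>
    intro M hdet hn
    have hb : M 0 1 = 0 := by omega
    have hc : M 1 0 = 0 := by omega
    rw [hb, hc] at hdet
    simp at hdet
    refine ⟨[], by simp, ?_⟩
    rw [List.prod_nil]
    ext i j
    fin_cases i <;> fin_cases j <;> simp [Matrix.one_apply] <;> omega
  | succ n ih =>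
    intro M hdet hn
    set a := M 0 0 with ha'
    set b := M 0 1 with hb'
    set c := M 1 0 with hc'
    set d := M 1 1 with hd'
    have ha : 1 ≤ a := by
      rcases Nat.eq_zero_or_pos a with h | h
      · rw [h] at hdet; omega
      · exact h
    have hd : 1 ≤ d := by
      rcases Nat.eq_zero_or_pos d with h | h
      · rw [h] at hdet; simp at hdet
      · exact h
    by_cases hca : a ≤ c
    · -- peel L
      have hbd : b ≤ d := by nlinarith
      set M' : Matrix (Fin 2) (Fin 2) ℕ := !![a, b; c - a, d - b] with hM'
      have hdet' : M' 0 0 * M' 1 1 = M' 0 1 * M' 1 0 + 1 := by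
        simp [hM']
        have hz : (a:ℤ)*d = b*c+1 := by exact_mod_cast hdet
        zify [hca, hbd]
        linear_combination hz
      obtain ⟨w, hw, hwp⟩ := ih M' hdet' (by simp [hM']; omega)
      refine ⟨L :: w, ?_, ?_⟩
      · intro A hA
        rcases List.mem_cons.1 hA with rfl | hA
        · exact Or.inl rfl
        · exact hw A hA
      · rw [List.prod_cons, hwp, Lmul]
        ext i j
        fin_cases i <;> fin_cases j <;> simp [hM'] <;> omega
    · by_cases hbd : d ≤ b
      · -- peel U
        set M' : Matrix (Fin 2) (Fin 2) ℕ := !![a - c, b - d; c, d] with hM'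
        have hdet' : M' 0 0 * M' 1 1 = M' 0 1 * M' 1 0 + 1 := by
          simp [hM']
          have hz : (a:ℤ)*d = b*c+1 := by exact_mod_cast hdet
          zify [hbd, le_of_not_ge hca]
          linear_combination hz
        obtain ⟨w, hw, hwp⟩ := ih M' hdet' (by simp [hM']; omega)
        refine ⟨U :: w, ?_, ?_⟩
        · intro A hA
          rcases List.mem_cons.1 hA with rfl | hA
          · exact Or.inr rfl
          · exact hw A hA
        · rw [List.prod_cons, hwp, Umul]
          ext i j
          fin_cases i <;> fin_cases j <;> simp [hM'] <;> omega
      · -- M = 1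
        have hkey : b * c + c + b + 1 ≤ a * d := by nlinarith
        have hb0 : b = 0 := by omega
        have hc0 : c = 0 := by omega
        rw [hb0, hc0] at hdet
        simp at hdet
        obtain ⟨ha1, hd1⟩ := hdet
        refine ⟨[], by simp, ?_⟩
        rw [List.prod_nil]
        ext i j
        fin_cases i <;> fin_cases j <;> simp [Matrix.one_apply] <;> omega

/-- SL₂(ℕ) is freely generated by L and U: every M with det 1 admits a unique
factorization as a product of L's and U's. -/
theorem stmt_0 (M : Matrix (Fin 2) (Fin 2) ℕ)
    (hdet : M 0 0 * M 1 1 = M 0 1 * M 1 0 + 1) :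
    ∃! w : List (Matrix (Fin 2) (Fin 2) ℕ),
      (∀ A ∈ w, A = L ∨ A = U) ∧ w.prod = M := by
  obtain ⟨w, hw, hwp⟩ := exists_word (M 0 1 + M 1 0) M hdet le_rfl
  exact ⟨w, ⟨hw, hwp⟩, fun w' ⟨h1, h2⟩ => word_eq w' w h1 hw (h2.trans hwp.symm)⟩
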